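/- Let G = ⟨S : R⟩ be a group presentation and let y ∈ S. Then the natural map from G to H := ⟨G, s, t : y = st, s² = t² = 1⟩ is injective, i.e., G embeds as a subgroup of H. -/

import Mathlib

open FreeGroup

variable {S : Type*}

/-- The relations of `H = ⟨G, s, t : y = st, s² = t² = 1⟩`, where the generators of `G = ⟨S : R⟩`
are included via `Sum.inl` and the two new generators `s, t` are `Sum.inr false, Sum.inr true`. -/
def extendedRels (R : Set (FreeGroup S)) (y : S) : Set (FreeGroup (S ⊕ Bool)) :=
  (FreeGroup.map Sum.inl) '' R ∪
    { (FreeGroup.of (Sum.inl y))⁻¹ * (FreeGroup.of (Sum.inr false) * FreeGroup.of (Sum.inr true)),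
      (FreeGroup.of (Sum.inr false)) ^ 2,
      (FreeGroup.of (Sum.inr true)) ^ 2 }

namespace InvExtAux

variable (R : Set (FreeGroup S)) (y : S)

/-- The order of `y` in `G`. -/
noncomputable def n : ℕ := orderOf (PresentedGroup.of y : PresentedGroup R)

/-- The map `ZMod n →+ Additive G` sending `1` to `y`. -/
noncomputable def fAdd : ZMod (n R y) →+ Additive (PresentedGroup R) :=
  ZMod.lift (n R y) ⟨zmultiplesHom _ (Additive.ofMul (PresentedGroup.of y)), by
    simp only [zmultiplesHom_apply, ← ofMul_zpow, zpow_natCast]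
    rw [n, pow_orderOf_eq_one]
    rfl⟩

/-- The map `Multiplicative (ZMod n) →* G` sending the generator to `y`. -/
noncomputable def toG : Multiplicative (ZMod (n R y)) →* PresentedGroup R :=
  AddMonoidHom.toMultiplicativeLeft (fAdd R y)

theorem toG_intCast (x : ℤ) :
    toG R y (Multiplicative.ofAdd ((x : ZMod (n R y)))) =
      (PresentedGroup.of y : PresentedGroup R) ^ x := by
  simp [toG, fAdd, AddMonoidHom.coe_toMultiplicativeLeft, ZMod.lift_coe, ← ofMul_zpow]

theorem toG_injective : Function.Injective (toG R y) := by
  intro a b hab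
  obtain ⟨xa, ha⟩ := ZMod.intCast_surjective (Multiplicative.toAdd a)
  obtain ⟨xb, hb⟩ := ZMod.intCast_surjective (Multiplicative.toAdd b)
  have ha' : a = Multiplicative.ofAdd ((xa : ZMod (n R y))) := by simp [ha]
  have hb' : b = Multiplicative.ofAdd ((xb : ZMod (n R y))) := by simp [hb]
  rw [ha', hb', toG_intCast, toG_intCast] at hab
  have h1 : (PresentedGroup.of y : PresentedGroup R) ^ (xa - xb) = 1 := by
    rw [zpow_sub, hab, mul_inv_cancel]
  rw [← orderOf_dvd_iff_zpow_eq_one] at h1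
  have h2 : ((xa - xb : ℤ) : ZMod (n R y)) = 0 := by
    rw [ZMod.intCast_zmod_eq_zero_iff_dvd]; exact h1
  have h3 : ((xa : ZMod (n R y))) = ((xb : ZMod (n R y))) := by
    push_cast at h2; linear_combination h2
  rw [ha', hb', h3]

/-- The dihedral group, lifted to the right universe. -/
def D := ULift.{u_1} (DihedralGroup (n R y))

noncomputable instance : Group (D R y) := ULift.group

/-- The map `Multiplicative (ZMod n) →* D` sending the generator to `r 1`. -/
noncomputable def toD : Multiplicative (ZMod (n R y)) →* D R y :=
  MonoidHom.mk' (fun k => ULift.up (DihedralGroup.r (Multiplicative.toAdd k))) (by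
    intro a b
    refine ULift.ext _ _ ?_
    show DihedralGroup.r _ = DihedralGroup.r _ * DihedralGroup.r _
    simp [add_comm])

theorem toD_injective : Function.Injective (toD R y) := by
  intro a b hab
  have := congrArg ULift.down hab
  exact Multiplicative.toAdd.injective (DihedralGroup.r.inj this)

/-- The family: `true ↦ G`, `false ↦ D`. -/
def Fam : Bool → Type u_1 := fun b =>
  Bool.rec (D R y) (PresentedGroup R) b

noncomputable instance : ∀ b, Group (Fam R y b) := fun b => by
  cases b
  · exact inferInstanceAs (Group (D R y))
  · exact inferInstanceAs (Group (PresentedGroup R))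

noncomputable def φf : ∀ b, Multiplicative (ZMod (n R y)) →* Fam R y b := fun b =>
  Bool.rec (toD R y) (toG R y) b

theorem φf_injective : ∀ b, Function.Injective (φf R y b) := fun b => by
  cases b
  · exact toD_injective R y
  · exact toG_injective R y

theorem key : Monoid.PushoutI.of (φ := φf R y) true (PresentedGroup.of y : PresentedGroup R) =
    Monoid.PushoutI.of (φ := φf R y) false (ULift.up (DihedralGroup.r 1)) := by
  have h1 := Monoid.PushoutI.of_apply_eq_base (φf R y) true
    (Multiplicative.ofAdd ((1 : ℤ) : ZMod (n R y)))
  have h2 := Monoid.PushoutI.of_apply_eq_base (φf R y) false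
    (Multiplicative.ofAdd ((1 : ℤ) : ZMod (n R y)))
  have e1 : φf R y true (Multiplicative.ofAdd ((1 : ℤ) : ZMod (n R y)))
      = (PresentedGroup.of y : PresentedGroup R) := by
    show toG R y _ = _
    rw [toG_intCast, zpow_one]
  have e2 : φf R y false (Multiplicative.ofAdd ((1 : ℤ) : ZMod (n R y)))
      = ULift.up (DihedralGroup.r 1) := by
    show toD R y _ = _
    show ULift.up (DihedralGroup.r (Multiplicative.toAdd (Multiplicative.ofAdd ((1 : ℤ) : ZMod (n R y))))) = _
    simp
  rw [e1] at h1; rw [e2] at h2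
  rw [h1, h2]

/-- The generator assignment for the map `H → G *_⟨y⟩ D`. -/
noncomputable def fgen : S ⊕ Bool → Monoid.PushoutI (φf R y) :=
  Sum.elim (fun a => Monoid.PushoutI.of (φ := φf R y) true (PresentedGroup.of a))
    (fun b => Monoid.PushoutI.of (φ := φf R y) false
      (ULift.up (Bool.rec (DihedralGroup.sr 0) (DihedralGroup.sr 1) b)))

theorem rels_ok : ∀ r ∈ extendedRels R y, FreeGroup.lift (fgen R y) r = 1 := by
  rintro r (⟨w, hw, rfl⟩ | hr)
  · -- relations of G
    have : FreeGroup.lift (fgen R y) (FreeGroup.map Sum.inl w)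
        = ((Monoid.PushoutI.of (φ := φf R y) true).comp (PresentedGroup.mk R)) w := by
      rw [← MonoidHom.comp_apply]
      congr 1
      ext a
      rfl
    rw [this]
    have hw1 : PresentedGroup.mk R w = 1 :=
      (QuotientGroup.eq_one_iff w).2 (Subgroup.subset_normalClosure hw)
    show Monoid.PushoutI.of (φ := φf R y) true (PresentedGroup.mk R w) = 1
    exact (congrArg (Monoid.PushoutI.of (φ := φf R y) true) hw1).trans (_root_.map_one _)
  · rcases hr with hr | hr | hr <;> subst hr
    · -- y⁻¹ s t
      simp only [_root_.map_mul, _root_.map_inv, FreeGroup.lift_apply_of]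
      show (fgen R y (Sum.inl y))⁻¹ * (fgen R y (Sum.inr false) * fgen R y (Sum.inr true)) = 1
      have : fgen R y (Sum.inr false) * fgen R y (Sum.inr true)
          = Monoid.PushoutI.of (φ := φf R y) false
              (ULift.up (DihedralGroup.sr 0) * ULift.up (DihedralGroup.sr 1) : D R y) := by
        exact (_root_.map_mul (Monoid.PushoutI.of (φ := φf R y) false) _ _).symm
      rw [this]
      have : (ULift.up (DihedralGroup.sr 0) * ULift.up (DihedralGroup.sr 1) : D R y)
          = ULift.up (DihedralGroup.r 1) := by
        refine ULift.ext _ _ ?_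
        show DihedralGroup.sr 0 * DihedralGroup.sr 1 = DihedralGroup.r 1
        simp
      rw [this]
      show (Monoid.PushoutI.of (φ := φf R y) true (PresentedGroup.of y))⁻¹ * _ = 1
      rw [key]
      simp
    · -- s²
      simp only [_root_.map_pow, FreeGroup.lift_apply_of]
      show (fgen R y (Sum.inr false)) ^ 2 = 1
      rw [fgen]
      simp only [Sum.elim_inr, ← map_pow]
      have : (ULift.up (DihedralGroup.sr 0) : D R y) ^ 2 = 1 := by
        rw [sq]
        refine ULift.ext _ _ ?_
        show DihedralGroup.sr 0 * DihedralGroup.sr 0 = 1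
        exact DihedralGroup.sr_mul_self 0
      exact ((_root_.map_pow (Monoid.PushoutI.of (φ := φf R y) false) (ULift.up (DihedralGroup.sr 0)) 2).symm.trans (congrArg (Monoid.PushoutI.of (φ := φf R y) false) this)).trans (_root_.map_one _)
    · -- t²
      simp only [_root_.map_pow, FreeGroup.lift_apply_of]
      show (fgen R y (Sum.inr true)) ^ 2 = 1
      rw [fgen]
      simp only [Sum.elim_inr, ← map_pow]
      have : (ULift.up (DihedralGroup.sr 1) : D R y) ^ 2 = 1 := by
        rw [sq]
        refine ULift.ext _ _ ?_
        show DihedralGroup.sr 1 * DihedralGroup.sr 1 = 1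
        exact DihedralGroup.sr_mul_self 1
      exact ((_root_.map_pow (Monoid.PushoutI.of (φ := φf R y) false) (ULift.up (DihedralGroup.sr 1)) 2).symm.trans (congrArg (Monoid.PushoutI.of (φ := φf R y) false) this)).trans (_root_.map_one _)

end InvExtAux

/-- Let `G = ⟨S : R⟩` be a group presentation and `y ∈ S`.  Then the natural map
from `G` to `H = ⟨G, s, t : y = st, s² = t² = 1⟩` (the homomorphism sending each generator of `G`
to the corresponding generator of `H`) is injective, i.e. `G` embeds as a subgroup of `H`. -/
theorem presentedGroup_embeds_in_involution_extension (R : Set (FreeGroup S)) (y : S) :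
    ∃ φ : PresentedGroup R →* PresentedGroup (extendedRels R y),
      (∀ a : S, φ (PresentedGroup.of a) = PresentedGroup.of (Sum.inl a)) ∧
        Function.Injective φ := by
  classical
  -- the natural map φ : G → H
  have hφrels : ∀ r ∈ R, FreeGroup.lift
      (fun a => (PresentedGroup.of (Sum.inl a) : PresentedGroup (extendedRels R y))) r = 1 := by
    intro r hr
    have : FreeGroup.lift
        (fun a => (PresentedGroup.of (Sum.inl a) : PresentedGroup (extendedRels R y))) r
        = ((PresentedGroup.mk (extendedRels R y)).comp (FreeGroup.map Sum.inl)) r := by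
      congr 1
      ext a
      rfl
    rw [this]
    simp only [MonoidHom.comp_apply]
    show (QuotientGroup.mk (FreeGroup.map Sum.inl r) : PresentedGroup (extendedRels R y)) = 1
    exact (QuotientGroup.eq_one_iff _).2
      (Subgroup.subset_normalClosure (Or.inl ⟨r, hr, rfl⟩))
  refine ⟨PresentedGroup.toGroup hφrels, fun a => PresentedGroup.toGroup.of hφrels, ?_⟩
  -- the map ψ : H → G *_⟨y⟩ D
  set ψ := PresentedGroup.toGroup (InvExtAux.rels_ok R y) with hψ
  have hcomp : ψ.comp (PresentedGroup.toGroup hφrels)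
      = Monoid.PushoutI.of (φ := InvExtAux.φf R y) true := by
    apply PresentedGroup.ext
    intro x
    simp only [MonoidHom.comp_apply, PresentedGroup.toGroup.of]
    rfl
  have hinj : Function.Injective (ψ ∘ PresentedGroup.toGroup hφrels) := by
    have : ψ ∘ PresentedGroup.toGroup hφrels
        = Monoid.PushoutI.of (φ := InvExtAux.φf R y) true := by
      funext x; exact DFunLike.congr_fun hcomp x
    rw [this]
    exact Monoid.PushoutI.of_injective (InvExtAux.φf_injective R y) true
  exact Function.Injective.of_comp hinj
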